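/- Let R > 0 and let p > 3 be a real number. Let q : (0,R) → ℝ be measurable with ∫₀^R r²|q(r)|^p dr < ∞. Then for every r ∈ (0,R) the function q is integrable on (r,R), and the operator (Eq)(r) = ∫_r^R q(ξ) dξ satisfies ∫₀^R r² |(Eq)(r)|^p dr ≤ (R^p/3) ((p−1)/(p−3))^{p−1} ∫₀^R r²|q(r)|^p dr. Consequently E maps the weighted space L_2^p(0,R) continuously into itself (and, since D_r Eq = −q, into the weighted Sobolev space W_2^{1,p}(0,R)). -/

import Mathlib

open Real MeasureTheory intervalIntegral

private lemma memLp_of_abs_rpow {μ : Measure ℝ} {f : ℝ → ℝ} {p : ℝ} (hp : 0 < p)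
    (hm : AEStronglyMeasurable f μ) (h : Integrable (fun x => |f x| ^ p) μ) :
    MemLp f (ENNReal.ofReal p) μ := by
  have hne : ENNReal.ofReal p ≠ 0 := by
    simp [ENNReal.ofReal_eq_zero, not_le, hp]
  have hiff := memLp_norm_rpow_iff (p := ENNReal.ofReal p) (q := ENNReal.ofReal p)
    hm hne ENNReal.ofReal_ne_top
  rw [ENNReal.div_self hne ENNReal.ofReal_ne_top] at hiff
  refine hiff.mp ?_
  rw [memLp_one_iff_integrable]
  refine h.congr (Filter.Eventually.of_forall fun x => ?_)
  simp [Real.norm_eq_abs, ENNReal.toReal_ofReal hp.le]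

/-- for `p > 3` and `q ∈ L₂^p(0,R)`, `q` is integrable on `(r,R)`
for every `r ∈ (0,R)` and the operator `(Eq)(r) = ∫_r^R q(ξ) dξ` satisfies
`∫₀^R r² |(Eq)(r)|^p dr ≤ (R^p/3) ((p-1)/(p-3))^{p-1} ∫₀^R r²|q(r)|^p dr`,
so that `E` maps `L₂^p(0,R)` continuously into itself. -/
theorem stmt11 (R p : ℝ) (hR : 0 < R) (hp : 3 < p)
    (q : ℝ → ℝ) (hq : Measurable q)
    (hint : IntegrableOn (fun r => r ^ 2 * |q r| ^ p) (Set.Ioo 0 R)) :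
    (∀ r ∈ Set.Ioo (0:ℝ) R, IntegrableOn q (Set.Ioc r R))
    ∧ ∫ r in Set.Ioo (0:ℝ) R, r ^ 2 * |∫ ξ in Set.Ioc r R, q ξ| ^ p
        ≤ R ^ p / 3 * ((p - 1) / (p - 3)) ^ (p - 1) *
            ∫ r in Set.Ioo (0:ℝ) R, r ^ 2 * |q r| ^ p := by
  have hp1 : 1 < p := by linarith
  have hp0 : 0 < p := by linarith
  have hp1' : 0 < p - 1 := by linarith
  have hp3 : 0 < p - 3 := by linarith
  set c : ℝ := -2 / (p - 1) with hc_def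
  have hc : -1 < c := by
    rw [hc_def, lt_div_iff₀ hp1']; linarith
  have hc1 : c + 1 = (p - 3) / (p - 1) := by
    rw [hc_def]; field_simp; ring
  have hc1pos : 0 < c + 1 := by rw [hc1]; positivity
  have hpq : p.HolderConjugate (p / (p - 1)) := Real.HolderConjugate.conjExponent hp1
  set A : ℝ := ∫ r in Set.Ioo (0:ℝ) R, r ^ 2 * |q r| ^ p with hA_def
  have hA0 : 0 ≤ A := by
    refine setIntegral_nonneg measurableSet_Ioo fun x _ => ?_
    have := Real.rpow_nonneg (abs_nonneg (q x)) p
    positivity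
  -- integrability of the weight on subintervals
  have hsub : ∀ r ∈ Set.Ioo (0:ℝ) R,
      IntegrableOn (fun ξ => ξ ^ 2 * |q ξ| ^ p) (Set.Ioc r R) := by
    intro r hr
    exact (hint.mono_set (Set.Ioo_subset_Ioo hr.1.le le_rfl)).congr_set_ae Ioo_ae_eq_Ioc.symm
  -- Part 1 : integrability of q on (r, R)
  have part1 : ∀ r ∈ Set.Ioo (0:ℝ) R, IntegrableOn q (Set.Ioc r R) := by
    intro r hr
    haveI : IsFiniteMeasure (volume.restrict (Set.Ioc r R)) :=
      ⟨by rw [Measure.restrict_apply_univ]; exact measure_Ioc_lt_top⟩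
    have hr2 : (0:ℝ) < r ^ 2 := pow_pos hr.1 2
    have hqp : Integrable (fun x => |q x| ^ p) (volume.restrict (Set.Ioc r R)) := by
      refine Integrable.mono' ((hsub r hr).const_mul (r ^ 2)⁻¹) ?_ ?_
      · exact ((hq.abs.pow_const p).aestronglyMeasurable)
      · filter_upwards [ae_restrict_mem measurableSet_Ioc] with x hx
        have ht : 0 ≤ |q x| ^ p := Real.rpow_nonneg (abs_nonneg _) _
        have hx2 : r ^ 2 ≤ x ^ 2 := by nlinarith [hx.1, hr.1]
        rw [Real.norm_eq_abs, abs_of_nonneg ht]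
        calc |q x| ^ p = ((r ^ 2)⁻¹ * r ^ 2) * |q x| ^ p := by
              rw [inv_mul_cancel₀ hr2.ne', one_mul]
          _ ≤ (r ^ 2)⁻¹ * (x ^ 2 * |q x| ^ p) := by
              rw [mul_assoc]
              exact mul_le_mul_of_nonneg_left
                (mul_le_mul_of_nonneg_right hx2 ht) (inv_nonneg.2 hr2.le)
    have hmem : MemLp q (ENNReal.ofReal p) (volume.restrict (Set.Ioc r R)) :=
      memLp_of_abs_rpow hp0 hq.aestronglyMeasurable hqp
    exact hmem.integrable (by rw [ENNReal.one_le_ofReal]; exact hp1.le)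
  refine ⟨part1, ?_⟩
  -- Pointwise bound : |Eq r|^p ≤ C uniformly
  set K : ℝ := ((p - 1) / (p - 3)) ^ (p - 1) with hK_def
  have hK0 : 0 ≤ K := Real.rpow_nonneg (by positivity) _
  set C : ℝ := R ^ (p - 3) * K * A with hC_def
  have key : ∀ r ∈ Set.Ioo (0:ℝ) R, |∫ ξ in Set.Ioc r R, q ξ| ^ p ≤ C := by
    intro r hr
    set f : ℝ → ℝ := fun ξ => ξ ^ ((2:ℝ)/p) * |q ξ| with hf_def
    set g : ℝ → ℝ := fun ξ => ξ ^ (-((2:ℝ)/p)) with hg_def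
    set μr := volume.restrict (Set.Ioc r R) with hμr
    have hfp : ∀ x ∈ Set.Ioc r R, |f x| ^ p = x ^ 2 * |q x| ^ p := by
      intro x hx
      have hx0 : 0 < x := lt_trans hr.1 hx.1
      have h1 : 0 ≤ x ^ ((2:ℝ)/p) := Real.rpow_nonneg hx0.le _
      rw [hf_def]
      simp only
      rw [abs_mul, abs_of_nonneg h1, abs_abs,
        Real.mul_rpow h1 (abs_nonneg _), ← Real.rpow_natCast x 2,
        ← Real.rpow_mul hx0.le]
      congr 2
      push_cast
      field_simp
      try ring
    have hfmem : MemLp f (ENNReal.ofReal p) μr := by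
      refine memLp_of_abs_rpow hp0
        (((measurable_id.pow measurable_const).mul hq.abs).aestronglyMeasurable) ?_
      refine ((hsub r hr).congr ?_)
      filter_upwards [ae_restrict_mem measurableSet_Ioc] with x hx
      exact (hfp x hx).symm
    have hgq : ∀ x ∈ Set.Ioc r R, |g x| ^ (p / (p - 1)) = x ^ c := by
      intro x hx
      have hx0 : 0 < x := lt_trans hr.1 hx.1
      rw [hg_def]
      simp only
      rw [abs_of_nonneg (Real.rpow_nonneg hx0.le _), ← Real.rpow_mul hx0.le]
      congr 1
      rw [hc_def]
      field_simp
      try ring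
    have hxc_int : IntegrableOn (fun x => x ^ c) (Set.Ioc r R) :=
      (intervalIntegrable_rpow' hc (a := r) (b := R)).1
    have hgmem : MemLp g (ENNReal.ofReal (p / (p - 1))) μr := by
      refine memLp_of_abs_rpow (by positivity)
        ((measurable_id.pow measurable_const).aestronglyMeasurable) ?_
      refine hxc_int.congr ?_
      filter_upwards [ae_restrict_mem measurableSet_Ioc] with x hx
      exact (hgq x hx).symm
    have hf_nonneg : 0 ≤ᵐ[μr] f := by
      filter_upwards [ae_restrict_mem measurableSet_Ioc] with x hx
      have hx0 : 0 < x := lt_trans hr.1 hx.1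
      exact mul_nonneg (Real.rpow_nonneg hx0.le _) (abs_nonneg _)
    have hg_nonneg : 0 ≤ᵐ[μr] g := by
      filter_upwards [ae_restrict_mem measurableSet_Ioc] with x hx
      have hx0 : 0 < x := lt_trans hr.1 hx.1
      exact Real.rpow_nonneg hx0.le _
    have holder := integral_mul_le_Lp_mul_Lq_of_nonneg hpq hf_nonneg hg_nonneg hfmem hgmem
    -- identify ∫ f*g with ∫ |q|
    have habs : ∫ x in Set.Ioc r R, |q x| = ∫ x in Set.Ioc r R, f x * g x := by
      refine setIntegral_congr_fun measurableSet_Ioc fun x hx => ?_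
      have hx0 : 0 < x := lt_trans hr.1 hx.1
      rw [hf_def, hg_def]
      simp only
      rw [mul_comm (x ^ ((2:ℝ)/p)) (|q x|), mul_assoc, ← Real.rpow_add hx0, add_neg_cancel, Real.rpow_zero, mul_one]
    -- bound the two factors
    have hfA : ∫ x in Set.Ioc r R, f x ^ p ≤ A := by
      have h1 : ∫ x in Set.Ioc r R, f x ^ p = ∫ x in Set.Ioc r R, x ^ 2 * |q x| ^ p := by
        refine setIntegral_congr_fun measurableSet_Ioc fun x hx => ?_
        have hx0 : 0 < x := lt_trans hr.1 hx.1
        have := hfp x hx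
        rwa [abs_of_nonneg (mul_nonneg (Real.rpow_nonneg hx0.le _) (abs_nonneg _))] at this
      rw [h1, ← setIntegral_congr_set Ioo_ae_eq_Ioc, hA_def]
      refine setIntegral_mono_set hint ?_ ?_
      · filter_upwards [ae_restrict_mem measurableSet_Ioo] with x hx
        have := Real.rpow_nonneg (abs_nonneg (q x)) p
        positivity
      · exact HasSubset.Subset.eventuallyLE (Set.Ioo_subset_Ioo hr.1.le le_rfl)
    have hgB : ∫ x in Set.Ioc r R, g x ^ (p / (p - 1)) ≤ R ^ (c + 1) / (c + 1) := by
      have h1 : ∫ x in Set.Ioc r R, g x ^ (p / (p - 1)) = ∫ x in Set.Ioc r R, x ^ c := by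
        refine setIntegral_congr_fun measurableSet_Ioc fun x hx => ?_
        have hx0 : 0 < x := lt_trans hr.1 hx.1
        have := hgq x hx
        rwa [abs_of_nonneg (Real.rpow_nonneg hx0.le _)] at this
      have h2 : ∫ x in Set.Ioc r R, x ^ c = (R ^ (c + 1) - r ^ (c + 1)) / (c + 1) := by
        rw [← integral_of_le hr.2.le]
        exact integral_rpow (Or.inl hc)
      have h3 : 0 ≤ r ^ (c + 1) := Real.rpow_nonneg hr.1.le _
      rw [h1, h2]
      gcongr
      linarith
    -- combine
    have hintf : 0 ≤ ∫ x in Set.Ioc r R, f x ^ p := by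
      refine setIntegral_nonneg measurableSet_Ioc fun x hx => ?_
      exact Real.rpow_nonneg (mul_nonneg (Real.rpow_nonneg (lt_trans hr.1 hx.1).le _)
        (abs_nonneg _)) _
    have hB0 : (0:ℝ) ≤ R ^ (c + 1) / (c + 1) := by
      have := Real.rpow_nonneg hR.le (c + 1)
      positivity
    have hEq : |∫ ξ in Set.Ioc r R, q ξ| ≤
        A ^ (1/p) * (R ^ (c + 1) / (c + 1)) ^ (1/(p/(p-1))) := by
      calc |∫ ξ in Set.Ioc r R, q ξ| ≤ ∫ ξ in Set.Ioc r R, |q ξ| := by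
            simpa using norm_integral_le_integral_norm (μ := μr) q
        _ = ∫ x in Set.Ioc r R, f x * g x := habs
        _ ≤ (∫ x in Set.Ioc r R, f x ^ p) ^ (1/p) *
            (∫ x in Set.Ioc r R, g x ^ (p/(p-1))) ^ (1/(p/(p-1))) := holder
        _ ≤ A ^ (1/p) * (R ^ (c + 1) / (c + 1)) ^ (1/(p/(p-1))) := by
            have hgint0 : 0 ≤ ∫ x in Set.Ioc r R, g x ^ (p/(p-1)) := by
              refine setIntegral_nonneg measurableSet_Ioc fun x hx => ?_
              exact Real.rpow_nonneg (Real.rpow_nonneg (lt_trans hr.1 hx.1).le _) _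
            gcongr <;>
              first
                | exact Real.rpow_nonneg hintf _
                | exact hfA
                | exact hgB
                | positivity
    have hEq0 : 0 ≤ |∫ ξ in Set.Ioc r R, q ξ| := abs_nonneg _
    have hstep := Real.rpow_le_rpow hEq0 hEq hp0.le
    refine le_trans hstep ?_
    have hrhs0 : 0 ≤ A ^ (1/p) := Real.rpow_nonneg hA0 _
    have hrhs1 : 0 ≤ (R ^ (c + 1) / (c + 1)) ^ (1/(p/(p-1))) := Real.rpow_nonneg hB0 _
    rw [Real.mul_rpow hrhs0 hrhs1, ← Real.rpow_mul hA0, ← Real.rpow_mul hB0]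
    have e1 : 1/p * p = 1 := by field_simp
    have e2 : 1/(p/(p-1)) * p = p - 1 := by field_simp; try ring
    rw [e1, e2, Real.rpow_one]
    have e3 : (R ^ (c + 1) / (c + 1)) ^ (p - 1) = R ^ (p - 3) * K := by
      rw [Real.div_rpow (Real.rpow_nonneg hR.le _) hc1pos.le,
        ← Real.rpow_mul hR.le]
      have e4 : (c + 1) * (p - 1) = p - 3 := by
        rw [hc1]; field_simp
      rw [e4, hc1, hK_def, div_eq_mul_inv (R ^ (p-3)),
        ← Real.inv_rpow (by positivity : (0:ℝ) ≤ (p-3)/(p-1)), inv_div]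
    rw [hC_def, e3]
    exact le_of_eq (by ring)
  -- final integration
  have hintC : IntegrableOn (fun r => C * r ^ 2) (Set.Ioo (0:ℝ) R) := by
    have : IntegrableOn (fun r => C * r ^ 2) (Set.Ioc (0:ℝ) R) :=
      (continuous_const.mul (continuous_pow 2)).integrableOn_Ioc
    exact this.mono_set Set.Ioo_subset_Ioc_self
  have hmono : ∫ r in Set.Ioo (0:ℝ) R, r ^ 2 * |∫ ξ in Set.Ioc r R, q ξ| ^ p
      ≤ ∫ r in Set.Ioo (0:ℝ) R, C * r ^ 2 := by
    refine integral_mono_of_nonneg ?_ hintC ?_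
    · refine Filter.Eventually.of_forall fun r => ?_
      have := Real.rpow_nonneg (abs_nonneg (∫ ξ in Set.Ioc r R, q ξ)) p
      positivity
    · refine (ae_restrict_iff' measurableSet_Ioo).2 ?_
      refine Filter.Eventually.of_forall fun r hr => ?_
      have h1 := key r hr
      have h2 : 0 ≤ r ^ 2 := sq_nonneg r
      calc r ^ 2 * |∫ ξ in Set.Ioc r R, q ξ| ^ p ≤ r ^ 2 * C :=
            mul_le_mul_of_nonneg_left h1 h2
        _ = C * r ^ 2 := mul_comm _ _
  have hval : ∫ r in Set.Ioo (0:ℝ) R, C * r ^ 2 = C * (R ^ 3 / 3) := by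
    rw [MeasureTheory.integral_const_mul]
    congr 1
    rw [setIntegral_congr_set Ioo_ae_eq_Ioc, ← integral_of_le hR.le,
      integral_pow]
    norm_num
  refine le_trans hmono ?_
  rw [hval]
  have hpow : R ^ (p - 3) * R ^ 3 = R ^ p := by
    rw [← Real.rpow_natCast R 3, ← Real.rpow_add hR]
    norm_num
  rw [hC_def]
  refine le_of_eq ?_
  calc R ^ (p-3) * K * A * (R ^ 3 / 3) = (R ^ (p-3) * R ^ 3) / 3 * K * A := by ring
    _ = R ^ p / 3 * K * A := by rw [hpow]
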